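/- Let H be a Hopf algebra with bijective antipode, C a left H-module coalgebra, and M a right H-module and left H-comodule. If the identity m^{(0)} ⊗_H (h^{(2)} ⊗ m^{(-1)} h^{(1)}) = (hm)^{(0)} ⊗_H (1 ⊗ (hm)^{(-1)}) holds in M ⊗_H (H ⊗ H) for all m ∈ M, h ∈ H (where hm denotes mh written on the left for the right action, and H ⊗ H carries the diagonal left H-action), then M satisfies the right-left anti-Yetter-Drinfeld condition Δ_M(mh) = S(h^{(3)}) m^{(-1)} h^{(1)} ⊗ m^{(0)} h^{(2)}. -/

import Mathlib

open TensorProduct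

namespace HC

variable {k : Type} [Field k]
variable {H : Type} [Ring H] [Algebra k H]
variable {M : Type} [AddCommGroup M] [Module k M]

def IsRAct (act : H →ₗ[k] M →ₗ[k] M) : Prop :=
  act 1 = LinearMap.id ∧ ∀ g h : H, act (g * h) = (act h) ∘ₗ (act g)

def IsLCoact (Δ : H →ₗ[k] H ⊗[k] H) (ε : H →ₗ[k] k)
    (coact : M →ₗ[k] H ⊗[k] M) : Prop :=
  ((TensorProduct.map Δ LinearMap.id) ∘ₗ coact =
    ((TensorProduct.assoc k H H M).symm.toLinearMap) ∘ₗ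
      (TensorProduct.map LinearMap.id coact) ∘ₗ coact) ∧
  (∀ m : M, (TensorProduct.lid k M) ((TensorProduct.map ε LinearMap.id) (coact m)) = m)

def AYDrl (Δ : H →ₗ[k] H ⊗[k] H) (S : H →ₗ[k] H)
    (act : H →ₗ[k] M →ₗ[k] M) (coact : M →ₗ[k] H ⊗[k] M) : Prop :=
  ∀ (h : H) (m : M) (s : Finset ℕ) (a b : ℕ → H)
    (t : ℕ → Finset ℕ) (c d : ℕ → ℕ → H)
    (u : Finset ℕ) (e : ℕ → H) (m0 : ℕ → M),
    Δ h = ∑ i ∈ s, a i ⊗ₜ b i →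
    (∀ i ∈ s, Δ (b i) = ∑ j ∈ t i, c i j ⊗ₜ d i j) →
    coact m = ∑ l ∈ u, e l ⊗ₜ m0 l →
    coact (act h m) = ∑ i ∈ s, ∑ j ∈ t i, ∑ l ∈ u,
      (S (d i j) * e l * a i) ⊗ₜ act (c i j) (m0 l)

/-- The diagonal left `H`-action on `H ⊗ H`, as a map
`g ⊗ (h ⊗ h') ↦ g⁽¹⁾h ⊗ g⁽²⁾h'`. -/
noncomputable def diagActU (Δ : H →ₗ[k] H ⊗[k] H) :
    H ⊗[k] (H ⊗[k] H) →ₗ[k] H ⊗[k] H :=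
  (TensorProduct.map (LinearMap.mul' k H) (LinearMap.mul' k H)) ∘ₗ
    (TensorProduct.tensorTensorTensorComm k H H H H).toLinearMap ∘ₗ
    (TensorProduct.map Δ LinearMap.id)

/-- The balancing relations defining `M ⊗_H (H ⊗ H)` (right action on `M`,
diagonal left action on `H ⊗ H`). -/
noncomputable def rel2 (Δ : H →ₗ[k] H ⊗[k] H) (actM : H →ₗ[k] M →ₗ[k] M) :
    Submodule k (M ⊗[k] (H ⊗[k] H)) :=
  Submodule.span k
    {z | ∃ (g : H) (m : M) (x : H ⊗[k] H),
      z = (actM g m) ⊗ₜ x - m ⊗ₜ (diagActU Δ (g ⊗ₜ x))}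

end HC

open HC TensorProduct

namespace Stmt18Aux
open HC Coalgebra

variable {k : Type} [Field k] {H : Type} [Ring H] [HopfAlgebra k H]
variable {M : Type} [AddCommGroup M] [Module k M]

local notation "S¹" => HopfAlgebra.antipode (R := k)

noncomputable def reprMul {ι κ : Type*} {x y : H} (r : Coalgebra.Repr k x ι)
    (r' : Coalgebra.Repr k y κ) : Coalgebra.Repr k (x * y) (ι × κ) where
  index := r.index ×ˢ r'.index
  left := fun p => r.left p.1 * r'.left p.2
  right := fun p => r.right p.1 * r'.right p.2
  eq := by
    rw [Finset.sum_product]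
    rw [Bialgebra.comul_mul, ← r.eq, ← r'.eq, Finset.sum_mul_sum]
    simp [Algebra.TensorProduct.tmul_mul_tmul]

lemma sum_counit_smul_right {ι : Type*} {x : H} (r : Coalgebra.Repr k x ι) :
    ∑ i ∈ r.index, counit (R := k) (r.left i) • r.right i = x := by
  have h := congrArg (TensorProduct.lid k H) (sum_counit_tmul_eq (R := k) r)
  simp only [map_sum, lid_tmul, one_smul] at h
  exact h

lemma sum_counit_smul_left {ι : Type*} {x : H} (r : Coalgebra.Repr k x ι) :
    ∑ i ∈ r.index, counit (R := k) (r.right i) • r.left i = x := by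
  have h := congrArg (TensorProduct.rid k H) (sum_tmul_counit_eq (R := k) r)
  simp only [map_sum, rid_tmul, one_smul] at h
  exact h

lemma antipode_one' : S¹ (1 : H) = 1 := by
  have h := HopfAlgebra.mul_antipode_rTensor_comul_apply (R := k) (a := (1 : H))
  simpa [Algebra.TensorProduct.one_def] using h

lemma contract_mid {ι : Type*} {κ : ι → Type*} (x : H) (r : Coalgebra.Repr k x ι)
    (r1 : ∀ i : ι, Coalgebra.Repr k (r.left i) (κ i)) :
    ∑ i ∈ r.index, ∑ p ∈ (r1 i).index,
      (r1 i).left p ⊗ₜ[k] (S¹ ((r1 i).right p) * r.right i) = x ⊗ₜ[k] (1 : H) := by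
  have h := sum_tmul_tmul_eq (R := k) r r1 (fun i => ℛ k (r.right i))
  have h2 := congrArg (LinearMap.lTensor H
    (LinearMap.mul' k H ∘ₗ (HopfAlgebra.antipode (R := k)).rTensor H)) h
  simp only [map_sum, LinearMap.lTensor_tmul, LinearMap.coe_comp, Function.comp_apply,
    LinearMap.rTensor_tmul, LinearMap.mul'_apply] at h2
  rw [h2]
  have h3 : ∀ i ∈ r.index,
      ∑ q ∈ (ℛ k (r.right i)).index,
        r.left i ⊗ₜ[k] (S¹ ((ℛ k (r.right i)).left q) * (ℛ k (r.right i)).right q)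
      = counit (R := k) (r.right i) • (r.left i ⊗ₜ[k] (1 : H)) := by
    intro i _
    rw [← tmul_sum, HopfAlgebra.sum_antipode_mul_eq_smul (ℛ k (r.right i)), tmul_smul]
  rw [Finset.sum_congr rfl h3]
  simp only [smul_tmul']
  rw [← TensorProduct.sum_tmul, sum_counit_smul_left r]

lemma contract_right {ι : Type*} {κ : ι → Type*} (x : H) (r : Coalgebra.Repr k x ι)
    (r1 : ∀ i : ι, Coalgebra.Repr k (r.left i) (κ i)) :
    ∑ i ∈ r.index, ∑ p ∈ (r1 i).index,
      (r1 i).left p ⊗ₜ[k] ((r1 i).right p * S¹ (r.right i)) = x ⊗ₜ[k] (1 : H) := by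
  have h := sum_tmul_tmul_eq (R := k) r r1 (fun i => ℛ k (r.right i))
  have h2 := congrArg (LinearMap.lTensor H
    (LinearMap.mul' k H ∘ₗ (HopfAlgebra.antipode (R := k)).lTensor H)) h
  simp only [map_sum, LinearMap.lTensor_tmul, LinearMap.coe_comp, Function.comp_apply,
    LinearMap.mul'_apply] at h2
  rw [h2]
  have h3 : ∀ i ∈ r.index,
      ∑ q ∈ (ℛ k (r.right i)).index,
        r.left i ⊗ₜ[k] ((ℛ k (r.right i)).left q * S¹ ((ℛ k (r.right i)).right q))
      = counit (R := k) (r.right i) • (r.left i ⊗ₜ[k] (1 : H)) := by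
    intro i _
    rw [← tmul_sum, HopfAlgebra.sum_mul_antipode_eq_smul (ℛ k (r.right i)), tmul_smul]
  rw [Finset.sum_congr rfl h3]
  simp only [smul_tmul']
  rw [← TensorProduct.sum_tmul, sum_counit_smul_left r]

theorem antipode_mul' (a b : H) : S¹ (a * b) = S¹ b * S¹ a := by
  symm
  have ra : Coalgebra.Repr k a (H × H) := ℛ k a
  have rb : Coalgebra.Repr k b (H × H) := ℛ k b
  have r1 : ∀ i : H × H, Coalgebra.Repr k (ra.left i) (H × H) := fun i => ℛ k (ra.left i)
  have s1 : ∀ j : H × H, Coalgebra.Repr k (rb.left j) (H × H) := fun j => ℛ k (rb.left j)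
  have ha : S¹ a = ∑ i ∈ ra.index, counit (R := k) (ra.left i) • S¹ (ra.right i) := by
    conv_lhs => rw [← sum_counit_smul_right ra]
    rw [map_sum]
    simp only [map_smul]
  have hb : S¹ b = ∑ j ∈ rb.index, counit (R := k) (rb.left j) • S¹ (rb.right j) := by
    conv_lhs => rw [← sum_counit_smul_right rb]
    rw [map_sum]
    simp only [map_smul]
  calc S¹ b * S¹ a
      = ∑ i ∈ ra.index, ∑ j ∈ rb.index,
          counit (R := k) (ra.left i * rb.left j) •
            (S¹ (rb.right j) * S¹ (ra.right i)) := by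
        rw [hb, ha, Finset.sum_mul_sum, Finset.sum_comm]
        refine Finset.sum_congr rfl fun i _ => Finset.sum_congr rfl fun j _ => ?_
        rw [smul_mul_assoc, mul_smul_comm, smul_smul, Bialgebra.counit_mul, mul_comm]
    _ = ∑ i ∈ ra.index, ∑ p ∈ (r1 i).index, ∑ j ∈ rb.index, ∑ q ∈ (s1 j).index,
          S¹ ((r1 i).left p * (s1 j).left q) *
            (((r1 i).right p * ((s1 j).right q * S¹ (rb.right j))) * S¹ (ra.right i)) := by
        refine Finset.sum_congr rfl fun i _ => ?_
        rw [← Finset.sum_comm]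
        refine Finset.sum_congr rfl fun j _ => ?_
        have hs := HopfAlgebra.sum_antipode_mul_eq_smul (R := k) (reprMul (r1 i) (s1 j))
        have hs' : ∑ x ∈ (r1 i).index ×ˢ (s1 j).index,
            S¹ ((r1 i).left x.1 * (s1 j).left x.2) *
              ((r1 i).right x.1 * (s1 j).right x.2)
            = counit (R := k) (ra.left i * rb.left j) • (1 : H) := hs
        rw [Finset.sum_product] at hs'
        have h1 : counit (R := k) (ra.left i * rb.left j) •
            (S¹ (rb.right j) * S¹ (ra.right i)) =
            (∑ p ∈ (r1 i).index, ∑ q ∈ (s1 j).index,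
              S¹ ((r1 i).left p * (s1 j).left q) * ((r1 i).right p * (s1 j).right q)) *
            (S¹ (rb.right j) * S¹ (ra.right i)) := by
          rw [hs', smul_mul_assoc, one_mul]
        rw [h1, Finset.sum_mul]
        refine Finset.sum_congr rfl fun p _ => ?_
        rw [Finset.sum_mul]
        refine Finset.sum_congr rfl fun q _ => ?_
        simp [mul_assoc]
    _ = ∑ i ∈ ra.index, ∑ p ∈ (r1 i).index,
          S¹ ((r1 i).left p * b) * ((r1 i).right p * S¹ (ra.right i)) := by
        refine Finset.sum_congr rfl fun i _ => Finset.sum_congr rfl fun p _ => ?_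
        have hc := congrArg (LinearMap.mul' k H ∘ₗ TensorProduct.map
          ((HopfAlgebra.antipode (R := k)) ∘ₗ LinearMap.mulLeft k ((r1 i).left p))
          (LinearMap.mulRight k (S¹ (ra.right i)) ∘ₗ LinearMap.mulLeft k ((r1 i).right p)))
          (contract_right b rb s1)
        simp only [map_sum, LinearMap.coe_comp, Function.comp_apply, TensorProduct.map_tmul,
          LinearMap.mul'_apply, LinearMap.mulLeft_apply, LinearMap.mulRight_apply,
          mul_one] at hc
        exact hc
    _ = S¹ (a * b) := by
        have hc := congrArg (LinearMap.mul' k H ∘ₗ TensorProduct.map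
          ((HopfAlgebra.antipode (R := k)) ∘ₗ LinearMap.mulRight k b) LinearMap.id)
          (contract_right a ra r1)
        simp only [map_sum, LinearMap.coe_comp, Function.comp_apply, TensorProduct.map_tmul,
          LinearMap.mul'_apply, LinearMap.mulRight_apply, LinearMap.id_coe, id_eq,
          mul_one] at hc
        exact hc

/-- The map `m ⊗ (g ⊗ g') ↦ ∑ (S g⁽²⁾ * g') ⊗ (m · g⁽¹⁾)`. -/
noncomputable def psi (actM : H →ₗ[k] M →ₗ[k] M) :
    M ⊗[k] (H ⊗[k] H) →ₗ[k] H ⊗[k] M :=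
  (TensorProduct.map (LinearMap.mul' k H ∘ₗ (HopfAlgebra.antipode (R := k)).rTensor H)
      (TensorProduct.lift actM))
    ∘ₗ (tensorTensorTensorComm k H H H M).toLinearMap
    ∘ₗ (TensorProduct.map (TensorProduct.comm k H H).toLinearMap LinearMap.id)
    ∘ₗ (TensorProduct.assoc k (H ⊗[k] H) H M).toLinearMap
    ∘ₗ (TensorProduct.comm k M ((H ⊗[k] H) ⊗[k] H)).toLinearMap
    ∘ₗ (LinearMap.lTensor M ((Coalgebra.comul (R := k)).rTensor H))

lemma psi_tmul (actM : H →ₗ[k] M →ₗ[k] M) (m : M) {ι : Type*} (g g' : H) (r : Coalgebra.Repr k g ι) :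
    psi actM (m ⊗ₜ (g ⊗ₜ g')) =
      ∑ i ∈ r.index, (S¹ (r.right i) * g') ⊗ₜ actM (r.left i) m := by
  simp only [psi, LinearMap.coe_comp, Function.comp_apply, LinearMap.lTensor_tmul,
    LinearMap.rTensor_tmul]
  rw [← r.eq]
  simp [sum_tmul, tmul_sum, map_sum, assoc_tmul, comm_tmul, tensorTensorTensorComm_tmul,
    lift.tmul]

lemma diagActU_tmul {ι : Type*} (g h h' : H) (r : Coalgebra.Repr k g ι) :
    diagActU (Coalgebra.comul (R := k)) (g ⊗ₜ (h ⊗ₜ h')) =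
      ∑ i ∈ r.index, (r.left i * h) ⊗ₜ[k] (r.right i * h') := by
  simp only [diagActU, LinearMap.coe_comp, Function.comp_apply, TensorProduct.map_tmul,
    LinearMap.id_coe, id_eq]
  rw [← r.eq]
  simp [sum_tmul, tmul_sum, map_sum, tensorTensorTensorComm_tmul]

lemma key_inner (actM : H →ₗ[k] M →ₗ[k] M) (α h' v : H) (m : M) {g : H}
    {ι : Type*} {κ : ι → Type*}
    (rg : Coalgebra.Repr k g ι) (r1 : ∀ i : ι, Coalgebra.Repr k (rg.left i) (κ i)) :
    ∑ i ∈ rg.index, ∑ p ∈ (r1 i).index,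
      (α * (S¹ ((r1 i).right p) * (rg.right i * h'))) ⊗ₜ[k] actM ((r1 i).left p * v) m
      = (α * h') ⊗ₜ[k] actM (g * v) m := by
  have hc := congrArg ((TensorProduct.map
      (LinearMap.mulRight k h' ∘ₗ LinearMap.mulLeft k α)
      (actM.flip m ∘ₗ LinearMap.mulRight k v))
    ∘ₗ (TensorProduct.comm k H H).toLinearMap) (contract_mid g rg r1)
  simp only [map_sum, LinearMap.coe_comp, Function.comp_apply, LinearEquiv.coe_coe,
    comm_tmul, TensorProduct.map_tmul, LinearMap.mulRight_apply, LinearMap.mulLeft_apply,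
    LinearMap.flip_apply, mul_one] at hc
  simpa [mul_assoc] using hc

lemma psi_act_tmul (actM : H →ₗ[k] M →ₗ[k] M) (hactM : IsRAct actM)
    (g : H) (m : M) (h h' : H) :
    psi actM (actM g m ⊗ₜ (h ⊗ₜ h')) =
      psi actM (m ⊗ₜ diagActU (Coalgebra.comul (R := k)) (g ⊗ₜ (h ⊗ₜ h'))) := by
  have rg : Coalgebra.Repr k g (H × H) := ℛ k g
  have r1 : ∀ i : H × H, Coalgebra.Repr k (rg.left i) (H × H) := fun i => ℛ k (rg.left i)
  have rh : Coalgebra.Repr k h (H × H) := ℛ k h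
  rw [psi_tmul actM (actM g m) h h' rh, diagActU_tmul g h h' rg, tmul_sum, map_sum]
  have hterm : ∀ i ∈ rg.index,
      psi actM (m ⊗ₜ[k] ((rg.left i * h) ⊗ₜ[k] (rg.right i * h'))) =
      ∑ p ∈ (r1 i).index, ∑ j ∈ rh.index,
        (S¹ (rh.right j) * (S¹ ((r1 i).right p) * (rg.right i * h'))) ⊗ₜ[k]
          actM ((r1 i).left p * rh.left j) m := by
    intro i _
    rw [psi_tmul actM m _ _ (reprMul (r1 i) rh)]
    have e1 : ∑ pq ∈ (reprMul (r1 i) rh).index,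
        (S¹ ((reprMul (r1 i) rh).right pq) * (rg.right i * h')) ⊗ₜ[k]
          actM ((reprMul (r1 i) rh).left pq) m
        = ∑ pq ∈ (r1 i).index ×ˢ rh.index,
          (S¹ ((r1 i).right pq.1 * rh.right pq.2) * (rg.right i * h')) ⊗ₜ[k]
            actM ((r1 i).left pq.1 * rh.left pq.2) m := rfl
    rw [e1, Finset.sum_product]
    refine Finset.sum_congr rfl fun p _ => Finset.sum_congr rfl fun j _ => ?_
    rw [antipode_mul']
    simp [mul_assoc]
  rw [Finset.sum_congr rfl hterm]
  have e2 : (∑ i ∈ rg.index, ∑ p ∈ (r1 i).index, ∑ j ∈ rh.index,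
        (S¹ (rh.right j) * (S¹ ((r1 i).right p) * (rg.right i * h'))) ⊗ₜ[k]
          actM ((r1 i).left p * rh.left j) m)
      = ∑ j ∈ rh.index, ∑ i ∈ rg.index, ∑ p ∈ (r1 i).index,
        (S¹ (rh.right j) * (S¹ ((r1 i).right p) * (rg.right i * h'))) ⊗ₜ[k]
          actM ((r1 i).left p * rh.left j) m := by
    rw [Finset.sum_congr rfl (fun i (_ : i ∈ rg.index) =>
      (Finset.sum_comm (s := (r1 i).index) (t := rh.index))), Finset.sum_comm]
  rw [e2]
  refine Finset.sum_congr rfl fun j _ => ?_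
  rw [key_inner actM (S¹ (rh.right j)) h' (rh.left j) m rg r1]
  congr 1
  rw [hactM.2 g (rh.left j)]
  rfl

lemma psi_act (actM : H →ₗ[k] M →ₗ[k] M) (hactM : IsRAct actM)
    (g : H) (m : M) (x : H ⊗[k] H) :
    psi actM (actM g m ⊗ₜ x) =
      psi actM (m ⊗ₜ diagActU (Coalgebra.comul (R := k)) (g ⊗ₜ x)) := by
  induction x using TensorProduct.induction_on with
  | zero => simp
  | tmul h h' => exact psi_act_tmul actM hactM g m h h'
  | add x y hx hy => simp only [tmul_add, map_add, hx, hy]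

lemma psi_vanish (actM : H →ₗ[k] M →ₗ[k] M) (hactM : IsRAct actM)
    {z : M ⊗[k] (H ⊗[k] H)}
    (hz : z ∈ rel2 (Coalgebra.comul (R := k)) actM) : psi actM z = 0 := by
  induction hz using Submodule.span_induction with
  | mem z hzmem =>
    obtain ⟨g, m, x, rfl⟩ := hzmem
    rw [map_sub, psi_act actM hactM g m x, sub_self]
  | zero => simp
  | add x y _ _ hx hy => rw [map_add, hx, hy, add_zero]
  | smul c x _ hx => rw [map_smul, hx, smul_zero]

lemma exists_nat_repr (x : H ⊗[k] M) :
    ∃ (u : Finset ℕ) (e : ℕ → H) (m0 : ℕ → M), x = ∑ l ∈ u, e l ⊗ₜ m0 l := by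
  induction x using TensorProduct.induction_on with
  | zero => exact ⟨∅, fun _ => 0, fun _ => 0, by simp⟩
  | tmul h m => exact ⟨{0}, fun _ => h, fun _ => m, by simp⟩
  | add x y hx hy =>
    obtain ⟨u, e, f, rfl⟩ := hx
    obtain ⟨v, e', f', rfl⟩ := hy
    refine ⟨u.image (fun n => 2 * n) ∪ v.image (fun n => 2 * n + 1),
      fun n => if n % 2 = 0 then e (n / 2) else e' (n / 2),
      fun n => if n % 2 = 0 then f (n / 2) else f' (n / 2), ?_⟩
    rw [Finset.sum_union, Finset.sum_image (by intro x _ y _ h; simp only at h; omega), Finset.sum_image (by intro x _ y _ h; simp only at h; omega)]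
    · congr 1
      · refine Finset.sum_congr rfl fun n _ => ?_
        have h1 : 2 * n % 2 = 0 := by omega
        have h2 : 2 * n / 2 = n := by omega
        simp [h1, h2]
      · refine Finset.sum_congr rfl fun n _ => ?_
        have h1 : ¬ ((2 * n + 1) % 2 = 0) := by omega
        have h2 : (2 * n + 1) / 2 = n := by omega
        simp [h1, h2]
    · rw [Finset.disjoint_left]
      intro x hx hy
      simp only [Finset.mem_image] at hx hy
      obtain ⟨n, _, rfl⟩ := hx
      obtain ⟨n', _, hn'⟩ := hy
      omega

end Stmt18Aux


/-- If the identity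
`m⁽⁰⁾ ⊗_H (h⁽²⁾ ⊗ m⁽⁻¹⁾h⁽¹⁾) = (mh)⁽⁰⁾ ⊗_H (1 ⊗ (mh)⁽⁻¹⁾)` holds in
`M ⊗_H (H ⊗ H)` for all `m ∈ M`, `h ∈ H`, then `M` satisfies the right-left
anti-Yetter-Drinfeld condition. -/
theorem stmt18 {k : Type} [Field k] {H : Type} [Ring H] [HopfAlgebra k H]
    (Sinv : H →ₗ[k] H)
    (hS : ∀ h : H, Sinv (HopfAlgebra.antipode (R := k) h) = h)
    (hS' : ∀ h : H, HopfAlgebra.antipode (R := k) (Sinv h) = h)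
    {M : Type} [AddCommGroup M] [Module k M]
    (actM : H →ₗ[k] M →ₗ[k] M) (coactM : M →ₗ[k] H ⊗[k] M)
    (hactM : IsRAct actM)
    (hcoactM : IsLCoact (Coalgebra.comul (R := k)) (Coalgebra.counit (R := k)) coactM)
    (hyp : ∀ (h : H) (m : M) (s : Finset ℕ) (a b : ℕ → H)
        (u : Finset ℕ) (e : ℕ → H) (m0 : ℕ → M)
        (u' : Finset ℕ) (e' : ℕ → H) (m0' : ℕ → M),
      Coalgebra.comul (R := k) h = ∑ i ∈ s, a i ⊗ₜ b i →
      coactM m = ∑ l ∈ u, e l ⊗ₜ m0 l →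
      coactM (actM h m) = ∑ r ∈ u', e' r ⊗ₜ m0' r →
      (∑ i ∈ s, ∑ l ∈ u, m0 l ⊗ₜ (b i ⊗ₜ (e l * a i))) -
          (∑ r ∈ u', m0' r ⊗ₜ ((1 : H) ⊗ₜ e' r)) ∈
        rel2 (Coalgebra.comul (R := k)) actM) :
    AYDrl (Coalgebra.comul (R := k)) (HopfAlgebra.antipode (R := k))
      actM coactM := by
  intro h m s a b t c d u e m0 hDh hDb hm0
  obtain ⟨u', e', m0', hrepr⟩ := Stmt18Aux.exists_nat_repr (coactM (actM h m))
  have hrel := hyp h m s a b u e m0 u' e' m0' hDh hm0 hrepr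
  have h0 := Stmt18Aux.psi_vanish actM hactM hrel
  rw [map_sub, sub_eq_zero] at h0
  have hY : Stmt18Aux.psi actM (∑ r ∈ u', m0' r ⊗ₜ[k] ((1 : H) ⊗ₜ[k] e' r))
      = coactM (actM h m) := by
    rw [map_sum, hrepr]
    refine Finset.sum_congr rfl fun r _ => ?_
    rw [Stmt18Aux.psi_tmul actM (m0' r) 1 (e' r)
      { index := ({0} : Finset ℕ), left := fun _ => (1 : H), right := fun _ => (1 : H),
        eq := by simp [Algebra.TensorProduct.one_def] }]
    simp [Stmt18Aux.antipode_one', hactM.1]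
  have hX : Stmt18Aux.psi actM (∑ i ∈ s, ∑ l ∈ u, m0 l ⊗ₜ[k] (b i ⊗ₜ[k] (e l * a i)))
      = ∑ i ∈ s, ∑ j ∈ t i, ∑ l ∈ u,
          (HopfAlgebra.antipode (R := k) (d i j) * e l * a i) ⊗ₜ[k] actM (c i j) (m0 l) := by
    rw [map_sum]
    refine Finset.sum_congr rfl fun i hi => ?_
    rw [map_sum]
    have hper : ∀ l ∈ u, Stmt18Aux.psi actM (m0 l ⊗ₜ[k] (b i ⊗ₜ[k] (e l * a i)))
        = ∑ j ∈ t i, (HopfAlgebra.antipode (R := k) (d i j) * (e l * a i)) ⊗ₜ[k]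
            actM (c i j) (m0 l) := fun l _ =>
      Stmt18Aux.psi_tmul actM (m0 l) (b i) (e l * a i)
        { index := t i, left := c i, right := d i, eq := (hDb i hi).symm }
    rw [Finset.sum_congr rfl hper, Finset.sum_comm]
    refine Finset.sum_congr rfl fun j _ => Finset.sum_congr rfl fun l _ => ?_
    rw [mul_assoc]
  rw [hX, hY] at h0
  exact h0.symm
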